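/- For i = 1,2 let two Mauldin–Williams graphs over the same underlying graph G = (V,E,r,s) coincide with their invariant lists, with invariant sets K¹, K², algebras A_i = C(Kⁱ, ℂ) and bimodules X_i. Suppose there exist a homeomorphism f : K¹ → K², a partition of K¹ into finitely many open (hence clopen) sets U₁,…,U_m, and permutations σ₁,…,σ_m of E such that for every j ∈ {1,…,m} and every e ∈ E: f(K¹_{r(e)}) = K²_{r(σ_j(e))}, and φ²_{σ_j(e)}(f(x)) = f(φ¹_e(x)) for all x ∈ U_j ∩ K¹_{r(e)}. Then the map V : X₂ → X₁ defined by V(ξ)(e,x) = ξ(σ_j(e), f(x)) whenever x ∈ U_j ∩ K¹_{r(e)} is a correspondence isomorphism over f; in particular X₁ and X₂ are isomorphic. -/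

import Mathlib

/-- A finite directed graph with surjective range and source maps
(no sources and no sinks). -/
structure DirGraph (V E : Type*) where
  r : E → V
  s : E → V
  r_surj : Function.Surjective r
  s_surj : Function.Surjective s

/-- A Mauldin–Williams graph over the directed graph `G`.  The compact metric
spaces `T v` are realized as pairwise disjoint nonempty compact subsets of an
ambient metric space `X` (modelling their disjoint union), and for each edge
`e` the map `φ e : T (r e) → T (s e)` satisfies
`c₁ * dist x y ≤ dist (φ e x) (φ e y) ≤ c * dist x y` with `0 < c₁ ≤ c < 1`. -/
structure MWGraph {V E : Type*} (G : DirGraph V E) (X : Type*) [MetricSpace X] where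
  T : V → Set X
  φ : E → X → X
  c₁ : ℝ
  c : ℝ
  c₁_pos : 0 < c₁
  c₁_le_c : c₁ ≤ c
  c_lt_one : c < 1
  T_compact : ∀ v, IsCompact (T v)
  T_nonempty : ∀ v, (T v).Nonempty
  T_disjoint : ∀ v w, v ≠ w → Disjoint (T v) (T w)
  maps_to : ∀ e, Set.MapsTo (φ e) (T (G.r e)) (T (G.s e))
  lower : ∀ e, ∀ x ∈ T (G.r e), ∀ y ∈ T (G.r e), c₁ * dist x y ≤ dist (φ e x) (φ e y)
  upper : ∀ e, ∀ x ∈ T (G.r e), ∀ y ∈ T (G.r e), dist (φ e x) (φ e y) ≤ c * dist x y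

namespace MWGraph

variable {V E : Type*} {G : DirGraph V E} {X : Type*} [MetricSpace X]

/-- `K : V → Set X` is an invariant list for the Mauldin–Williams graph `M`:
a family of nonempty compact sets `K v ⊆ T v` with
`K v = ⋃_{e ∈ E, s e = v} φ e '' K (r e)` for every vertex `v`. -/
def IsInvariantList (M : MWGraph G X) (K : V → Set X) : Prop :=
  (∀ v, K v ⊆ M.T v) ∧ (∀ v, IsCompact (K v)) ∧ (∀ v, (K v).Nonempty) ∧
    (∀ v, K v = ⋃ e ∈ {e : E | G.s e = v}, M.φ e '' K (G.r e))

/-- The Mauldin–Williams graph coincides with its own invariant list,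
i.e. `(T v)_{v ∈ V}` is itself the invariant list. -/
def SelfInvariant (M : MWGraph G X) : Prop :=
  ∀ v, M.T v = ⋃ e ∈ {e : E | G.s e = v}, M.φ e '' M.T (G.r e)

/-- The invariant set: the (disjoint) union of the sets of the family. -/
def KK (M : MWGraph G X) : Set X := ⋃ v, M.T v

/-- A Mauldin–Williams graph is totally disconnected if
`φ e '' K (r e)` and `φ g '' K (r g)` are disjoint whenever `e ≠ g`, `s e = s g`. -/
def TotallyDisconnected (M : MWGraph G X) : Prop :=
  ∀ e g : E, e ≠ g → G.s e = G.s g →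
    Disjoint (M.φ e '' M.T (G.r e)) (M.φ g '' M.T (G.r g))

end MWGraph
namespace MWGraph

variable {V E : Type*} [Fintype E] {G : DirGraph V E}

/-- An element of the bimodule `X = C(E ×_G K, ℂ)` associated with a
Mauldin–Williams graph coinciding with its invariant list, encoded as a
function `ξ : E → X → ℂ` which is continuous on `K (r e)` in the second
variable and (as a normalization) vanishes off `K (r e)`. -/
def IsElt {X : Type*} [MetricSpace X] (M : MWGraph G X) (ξ : E → X → ℂ) : Prop :=
  (∀ e, ContinuousOn (ξ e) (M.T (G.r e))) ∧ ∀ e x, x ∉ M.T (G.r e) → ξ e x = 0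

/-- The left action of `A = C(K, ℂ)`: `(a · ξ)(e, x) = a (φ e x) * ξ e x`. -/
def lAct {X : Type*} [MetricSpace X] (M : MWGraph G X) (a : X → ℂ) (ξ : E → X → ℂ) :
    E → X → ℂ :=
  fun e x => a (M.φ e x) * ξ e x

/-- The right action of `A = C(K, ℂ)`: `(ξ · a)(e, x) = ξ e x * a x`. -/
def rAct (ξ : E → X → ℂ) (a : X → ℂ) : E → X → ℂ :=
  fun e x => ξ e x * a x

/-- The `A`-valued inner product
`⟨ξ, η⟩(x) = ∑_{e ∈ E, x ∈ K (r e)} conj (ξ e x) * η e x` (thanks to the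
normalization in `IsElt`, the sum may be taken over all edges). -/
noncomputable def innerProd {X : Type*} (ξ η : E → X → ℂ) : X → ℂ :=
  fun x => ∑ e : E, (starRingEnd ℂ) (ξ e x) * η e x

/-- A correspondence isomorphism `W : X₂ → X₁` over a homeomorphism
`f : K¹ → K²`: a bijective linear map between the bimodules with
`W (a·ξ·b) = (a ∘ f) · W ξ · (b ∘ f)` and `⟨W ξ, W η⟩_{A₁} = ⟨ξ, η⟩_{A₂} ∘ f`. -/
structure CorrIso {X₁ X₂ : Type*} [MetricSpace X₁] [MetricSpace X₂]
    (M₁ : MWGraph G X₁) (M₂ : MWGraph G X₂) (f : X₁ → X₂)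
    (W : (E → X₂ → ℂ) → (E → X₁ → ℂ)) : Prop where
  maps : ∀ ξ, IsElt M₂ ξ → IsElt M₁ (W ξ)
  map_add : ∀ ξ η, IsElt M₂ ξ → IsElt M₂ η → W (ξ + η) = W ξ + W η
  map_smul : ∀ (z : ℂ) ξ, IsElt M₂ ξ → W (z • ξ) = z • W ξ
  bimodule : ∀ (a b : X₂ → ℂ) ξ, ContinuousOn a M₂.KK → ContinuousOn b M₂.KK →
    IsElt M₂ ξ → W (lAct M₂ a (rAct ξ b)) = lAct M₁ (a ∘ f) (rAct (W ξ) (b ∘ f))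
  inner_eq : ∀ ξ η, IsElt M₂ ξ → IsElt M₂ η → ∀ x ∈ M₁.KK,
    innerProd (W ξ) (W η) x = innerProd ξ η (f x)
  injective : ∀ ξ η, IsElt M₂ ξ → IsElt M₂ η → W ξ = W η → ξ = η
  surjective : ∀ η, IsElt M₁ η → ∃ ξ, IsElt M₂ ξ ∧ W ξ = η

end MWGraph

/-- If there are a homeomorphism `f : K¹ → K²`, a partition of `K¹`
into finitely many (cl)open subsets `U₁, …, U_m`, and permutations `σ₁, …, σ_m` of `E`
with `f (K¹ (r e)) = K² (r (σ_j e))` and `φ² (σ_j e) (f x) = f (φ¹ e x)` for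
`x ∈ U_j ∩ K¹ (r e)`, then the map `V ξ (e, x) = ξ (σ_j e, f x)` (for `x ∈ U_j ∩ K¹ (r e)`)
is a correspondence isomorphism over `f`; in particular `X₁ ≅ X₂`. -/
theorem MWGraph.corrIso_of_local_conjugacy {V E : Type*} [Fintype V] [Fintype E]
    {X₁ X₂ : Type*} [MetricSpace X₁] [MetricSpace X₂] {G : DirGraph V E}
    (M₁ : MWGraph G X₁) (M₂ : MWGraph G X₂)
    (hM₁ : M₁.SelfInvariant) (hM₂ : M₂.SelfInvariant)
    (f : X₁ → X₂) (g : X₂ → X₁)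
    (hf : Set.MapsTo f M₁.KK M₂.KK) (hg : Set.MapsTo g M₂.KK M₁.KK)
    (hfc : ContinuousOn f M₁.KK) (hgc : ContinuousOn g M₂.KK)
    (hgf : ∀ x ∈ M₁.KK, g (f x) = x) (hfg : ∀ y ∈ M₂.KK, f (g y) = y)
    (m : ℕ) (U : Fin m → Set X₁)
    (hUopen : ∀ j, ∃ O : Set X₁, IsOpen O ∧ U j = O ∩ M₁.KK)
    (hUdisj : ∀ j j', j ≠ j' → Disjoint (U j) (U j'))
    (hUcover : (⋃ j, U j) = M₁.KK)
    (σ : Fin m → Equiv.Perm E)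
    (hrange : ∀ (j : Fin m) (e : E), f '' M₁.T (G.r e) = M₂.T (G.r (σ j e)))
    (hconj : ∀ (j : Fin m) (e : E), ∀ x ∈ U j ∩ M₁.T (G.r e),
      M₂.φ (σ j e) (f x) = f (M₁.φ e x)) :
    ∃ W : (E → X₂ → ℂ) → (E → X₁ → ℂ),
      MWGraph.CorrIso M₁ M₂ f W ∧
      ∀ ξ, MWGraph.IsElt M₂ ξ → ∀ (j : Fin m) (e : E), ∀ x ∈ U j ∩ M₁.T (G.r e),
        W ξ e x = ξ (σ j e) (f x) := by
  
  classical
  set W : (E → X₂ → ℂ) → (E → X₁ → ℂ) :=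
    fun ξ e x => ∑ j : Fin m, if x ∈ U j ∩ M₁.T (G.r e) then ξ (σ j e) (f x) else 0
    with hW
  have hT1K : ∀ v, M₁.T v ⊆ M₁.KK := fun v => Set.subset_iUnion M₁.T v
  have hT2K : ∀ v, M₂.T v ⊆ M₂.KK := fun v => Set.subset_iUnion M₂.T v
  have hfinj : Set.InjOn f M₁.KK := by
    intro a ha b hb h
    rw [← hgf a ha, ← hgf b hb, h]
  have hmem : ∀ x ∈ M₁.KK, ∃ j, x ∈ U j := by
    intro x hx
    rw [← hUcover] at hx
    exact Set.mem_iUnion.mp hx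
  have hfmapsT : ∀ (j : Fin m) (e : E),
      Set.MapsTo f (M₁.T (G.r e)) (M₂.T (G.r (σ j e))) := by
    intro j e x hx
    rw [← hrange j e]
    exact Set.mem_image_of_mem f hx
  have hWval : ∀ (ξ : E → X₂ → ℂ) (j : Fin m) (e : E) (x : X₁),
      x ∈ U j → x ∈ M₁.T (G.r e) → W ξ e x = ξ (σ j e) (f x) := by
    intro ξ j e x hxU hxT
    simp only [hW]
    rw [Finset.sum_eq_single j]
    · rw [if_pos ⟨hxU, hxT⟩]
    · intro j' _ hne
      rw [if_neg]
      rintro ⟨hxU', -⟩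
      exact (Set.disjoint_left.mp (hUdisj j' j hne)) hxU' hxU
    · intro h; exact absurd (Finset.mem_univ j) h
  have hWzero : ∀ (ξ : E → X₂ → ℂ) (e : E) (x : X₁),
      x ∉ M₁.T (G.r e) → W ξ e x = 0 := by
    intro ξ e x hx
    simp only [hW]
    apply Finset.sum_eq_zero
    intro j _
    rw [if_neg]
    rintro ⟨-, h2⟩; exact hx h2
  have hfx_not : ∀ (j : Fin m) (e : E) (x : X₁), x ∈ M₁.KK →
      x ∉ M₁.T (G.r e) → f x ∉ M₂.T (G.r (σ j e)) := by
    intro j e x hxK hxT hmem'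
    rw [← hrange j e] at hmem'
    obtain ⟨x', hx', hfx⟩ := hmem'
    have := hfinj (hT1K _ hx') hxK hfx
    rw [this] at hx'
    exact hxT hx'
  have hWall : ∀ (ξ : E → X₂ → ℂ), MWGraph.IsElt M₂ ξ → ∀ (j : Fin m) (x : X₁),
      x ∈ U j → ∀ e, W ξ e x = ξ (σ j e) (f x) := by
    intro ξ hξ j x hxU e
    by_cases hxT : x ∈ M₁.T (G.r e)
    · exact hWval ξ j e x hxU hxT
    · have hxK : x ∈ M₁.KK := by rw [← hUcover]; exact Set.mem_iUnion.mpr ⟨j, hxU⟩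
      rw [hWzero ξ e x hxT, hξ.2 _ _ (hfx_not j e x hxK hxT)]
  refine ⟨W, ⟨?_, ?_, ?_, ?_, ?_, ?_, ?_⟩, ?_⟩
  · -- maps
    intro ξ hξ
    constructor
    · intro e x hx
      obtain ⟨j, hxU⟩ := hmem x (hT1K _ hx)
      obtain ⟨O, hO, hUO⟩ := hUopen j
      have hxO : x ∈ O := by
        have := hxU; rw [hUO] at this; exact this.1
      have hcomp : ContinuousWithinAt (fun y => ξ (σ j e) (f y)) (M₁.T (G.r e)) x :=
        (ContinuousOn.comp (hξ.1 (σ j e)) (hfc.mono (hT1K _)) (hfmapsT j e)) x hx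
      apply hcomp.congr_of_eventuallyEq
      · have hevO : ∀ᶠ y in nhdsWithin x (M₁.T (G.r e)), y ∈ O :=
          mem_nhdsWithin_of_mem_nhds (hO.mem_nhds hxO)
        filter_upwards [hevO, self_mem_nhdsWithin] with y hyO hyT
        exact hWval ξ j e y (by rw [hUO]; exact ⟨hyO, hT1K _ hyT⟩) hyT
      · exact hWval ξ j e x hxU hx
    · intro e x hx
      exact hWzero ξ e x hx
  · -- map_add
    intro ξ η hξ hη
    funext e x
    simp only [hW, Pi.add_apply]
    rw [← Finset.sum_add_distrib]
    apply Finset.sum_congr rfl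
    intro j _
    split <;> simp
  · -- map_smul
    intro z ξ hξ
    funext e x
    simp only [hW, Pi.smul_apply, smul_eq_mul, Finset.mul_sum]
    apply Finset.sum_congr rfl
    intro j _
    split <;> simp
  · -- bimodule
    intro a b ξ ha hb hξ
    funext e x
    simp only [hW, MWGraph.lAct, MWGraph.rAct, Function.comp]
    rw [Finset.sum_mul, Finset.mul_sum]
    apply Finset.sum_congr rfl
    intro j _
    by_cases hP : x ∈ U j ∩ M₁.T (G.r e)
    · rw [if_pos hP, if_pos hP, hconj j e x hP]
    · rw [if_neg hP, if_neg hP]; ring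
  · -- inner_eq
    intro ξ η hξ hη x hxK
    obtain ⟨j, hxU⟩ := hmem x hxK
    simp only [MWGraph.innerProd]
    calc ∑ e : E, (starRingEnd ℂ) (W ξ e x) * W η e x
        = ∑ e : E, (starRingEnd ℂ) (ξ (σ j e) (f x)) * η (σ j e) (f x) := by
          apply Finset.sum_congr rfl
          intro e _
          rw [hWall ξ hξ j x hxU e, hWall η hη j x hxU e]
      _ = ∑ e : E, (starRingEnd ℂ) (ξ e (f x)) * η e (f x) :=
          Equiv.sum_comp (σ j) (fun e => (starRingEnd ℂ) (ξ e (f x)) * η e (f x))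
  · -- injective
    intro ξ η hξ hη hWeq
    funext e' y
    by_cases hy : y ∈ M₂.T (G.r e')
    · have hyK : y ∈ M₂.KK := hT2K _ hy
      have hxK : g y ∈ M₁.KK := hg hyK
      have hfx : f (g y) = y := hfg y hyK
      obtain ⟨j, hxU⟩ := hmem (g y) hxK
      have hσ : σ j ((σ j)⁻¹ e') = e' := Equiv.apply_symm_apply (σ j) e'
      have hxT : g y ∈ M₁.T (G.r ((σ j)⁻¹ e')) := by
        have h1 : y ∈ M₂.T (G.r (σ j ((σ j)⁻¹ e'))) := by rw [hσ]; exact hy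
        rw [← hrange j _] at h1
        obtain ⟨x', hx', hfx'⟩ := h1
        have hx'eq : x' = g y := hfinj (hT1K _ hx') hxK (by rw [hfx', hfx])
        rwa [hx'eq] at hx'
      have h1 := hWall ξ hξ j (g y) hxU ((σ j)⁻¹ e')
      have h2 := hWall η hη j (g y) hxU ((σ j)⁻¹ e')
      rw [hWeq] at h1
      rw [hσ, hfx] at h1 h2
      exact h1.symm.trans h2
    · rw [hξ.2 _ _ hy, hη.2 _ _ hy]
  · -- surjective
    intro η hη
    set ξf : E → X₂ → ℂ := fun e' y =>
      ∑ j : Fin m, if g y ∈ U j ∧ y ∈ M₂.T (G.r e') then η ((σ j)⁻¹ e') (g y) else 0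
      with hξf
    have hgmaps : ∀ (j : Fin m) (e' : E),
        Set.MapsTo g (M₂.T (G.r e')) (M₁.T (G.r ((σ j)⁻¹ e'))) := by
      intro j e' y hy
      have h1 : y ∈ M₂.T (G.r (σ j ((σ j)⁻¹ e'))) := by
        rw [show σ j ((σ j)⁻¹ e') = e' from Equiv.apply_symm_apply (σ j) e']; exact hy
      rw [← hrange j _] at h1
      obtain ⟨x', hx', rfl⟩ := h1
      rwa [hgf x' (hT1K _ hx')]
    have hξval : ∀ (j : Fin m) (e' : E) (y : X₂), g y ∈ U j → y ∈ M₂.T (G.r e') →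
        ξf e' y = η ((σ j)⁻¹ e') (g y) := by
      intro j e' y hyU hyT
      simp only [hξf]
      rw [Finset.sum_eq_single j]
      · rw [if_pos ⟨hyU, hyT⟩]
      · intro j' _ hne
        rw [if_neg]
        rintro ⟨hyU', -⟩
        exact (Set.disjoint_left.mp (hUdisj j' j hne)) hyU' hyU
      · intro h; exact absurd (Finset.mem_univ j) h
    refine ⟨ξf, ⟨?_, ?_⟩, ?_⟩
    · intro e' y₀ hy₀
      have hy₀K : y₀ ∈ M₂.KK := hT2K _ hy₀
      have hx₀K : g y₀ ∈ M₁.KK := hg hy₀K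
      obtain ⟨j, hxU⟩ := hmem _ hx₀K
      obtain ⟨O, hO, hUO⟩ := hUopen j
      have hx₀O : g y₀ ∈ O := by
        have := hxU; rw [hUO] at this; exact this.1
      have hgcw : ContinuousWithinAt g (M₂.T (G.r e')) y₀ :=
        (hgc.mono (hT2K _)) y₀ hy₀
      have hcomp : ContinuousWithinAt (fun y => η ((σ j)⁻¹ e') (g y)) (M₂.T (G.r e')) y₀ :=
        ((hη.1 _).comp (hgc.mono (hT2K _)) (hgmaps j e')) y₀ hy₀
      apply hcomp.congr_of_eventuallyEq
      · have hevO : ∀ᶠ y in nhdsWithin y₀ (M₂.T (G.r e')), g y ∈ O :=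
          hgcw (hO.mem_nhds hx₀O)
        filter_upwards [hevO, self_mem_nhdsWithin] with y hyO hyT
        exact hξval j e' y (by rw [hUO]; exact ⟨hyO, hg (hT2K _ hyT)⟩) hyT
      · exact hξval j e' y₀ hxU hy₀
    · intro e' y hy
      apply Finset.sum_eq_zero
      intro j _
      rw [if_neg]
      rintro ⟨-, h2⟩; exact hy h2
    · funext e x
      by_cases hxT : x ∈ M₁.T (G.r e)
      · obtain ⟨j, hxU⟩ := hmem x (hT1K _ hxT)
        rw [hWval ξf j e x hxU hxT]
        have hfxT : f x ∈ M₂.T (G.r (σ j e)) := hfmapsT j e hxT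
        have hgfx : g (f x) ∈ U j := by rw [hgf x (hT1K _ hxT)]; exact hxU
        rw [hξval j (σ j e) (f x) hgfx hfxT, hgf x (hT1K _ hxT),
          show (σ j)⁻¹ (σ j e) = e from Equiv.symm_apply_apply (σ j) e]
      · rw [hWzero ξf e x hxT, hη.2 e x hxT]
  · -- the explicit formula
    intro ξ hξ j e x hx
    exact hWval ξ j e x hx.1 hx.2
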